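/- Let F(β,u) := max_{n ∈ ℤ≥0} (α₁ J^{2n} u − A J^{3n}) with α₁, A > 0 and J ∈ (0,1). Then there exist constants 0 < c ≤ C (depending on α₁, A, J) such that c·u³ ≤ F(β,u) ≤ C·u³ for all sufficiently small u > 0. -/

import Mathlib

/-- Cubic scaling of `F(β,u) = max_{n≥0}(α₁J^{2n}u − AJ^{3n})`: for `J ∈ (0,1)`, `α₁, A > 0`
there are constants `0 < c ≤ C` with `c·u³ ≤ F(β,u) ≤ C·u³` for all sufficiently small `u > 0`. -/
theorem stmt12 (J α₁ A : ℝ) (hJ0 : 0 < J) (hJ1 : J < 1) (hα₁ : 0 < α₁) (hA : 0 < A) :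
    ∃ c C u₀ : ℝ, 0 < c ∧ c ≤ C ∧ 0 < u₀ ∧
      ∀ u : ℝ, 0 < u → u ≤ u₀ →
        c * u ^ 3 ≤ (⨆ n : ℕ, (α₁ * J ^ (2 * n) * u - A * J ^ (3 * n)))
        ∧ (⨆ n : ℕ, (α₁ * J ^ (2 * n) * u - A * J ^ (3 * n))) ≤ C * u ^ 3 := by
  set δ : ℝ := min (α₁ * J ^ 2 / (2 * A)) 1 with hδdef
  have hδpos : 0 < δ := lt_min (by positivity) one_pos
  have hδ1 : δ ≤ 1 := min_le_right _ _
  have hδ2 : A * δ ≤ α₁ * J ^ 2 / 2 := by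
    have h := min_le_left (α₁ * J ^ 2 / (2 * A)) 1
    have : A * δ ≤ A * (α₁ * J ^ 2 / (2 * A)) := by
      exact mul_le_mul_of_nonneg_left h hA.le
    calc A * δ ≤ A * (α₁ * J ^ 2 / (2 * A)) := this
      _ = α₁ * J ^ 2 / 2 := by field_simp
  set c : ℝ := δ ^ 2 * (α₁ * J ^ 2 - A * δ) with hcdef
  have hcpos : 0 < c := by
    have : A * δ < α₁ * J ^ 2 := by nlinarith [sq_nonneg J, mul_pos hα₁ (mul_pos hJ0 hJ0)]
    have h2 : 0 < α₁ * J ^ 2 - A * δ := by linarith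
    positivity
  set C0 : ℝ := 4 * α₁ ^ 3 / (27 * A ^ 2) with hC0def
  refine ⟨c, max c C0, 1 / 2, hcpos, le_max_left _ _, by norm_num, ?_⟩
  intro u hu hu2
  -- pointwise upper bound for each term
  have hterm : ∀ n : ℕ, α₁ * J ^ (2 * n) * u - A * J ^ (3 * n) ≤ C0 * u ^ 3 := by
    intro n
    have hx : (0:ℝ) ≤ J ^ n := pow_nonneg hJ0.le n
    rw [mul_comm 2 n, mul_comm 3 n, pow_mul, pow_mul]
    set x := J ^ n
    have key : 0 ≤ (3 * A * x - 2 * α₁ * u) ^ 2 * (3 * A * x + α₁ * u) := by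
      apply mul_nonneg (sq_nonneg _)
      nlinarith [mul_nonneg hA.le hx, mul_nonneg hα₁.le hu.le]
    rw [hC0def]
    rw [div_mul_eq_mul_div, le_div_iff₀ (by positivity)]
    nlinarith [key]
  have hbdd : BddAbove (Set.range fun n : ℕ => α₁ * J ^ (2 * n) * u - A * J ^ (3 * n)) := by
    refine ⟨C0 * u ^ 3, ?_⟩
    rintro y ⟨n, rfl⟩
    exact hterm n
  constructor
  · -- lower bound: pick least n with J^n ≤ δ u
    have hex : ∃ n : ℕ, J ^ n ≤ δ * u := by
      obtain ⟨n, hn⟩ := exists_pow_lt_of_lt_one (mul_pos hδpos hu) hJ1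
      exact ⟨n, hn.le⟩
    set n := Nat.find hex with hn
    have hnle : J ^ n ≤ δ * u := Nat.find_spec hex
    have hδu1 : δ * u < 1 := by
      have : δ * u ≤ 1 * (1/2) := mul_le_mul hδ1 hu2 hu.le one_pos.le
      linarith
    have hn1 : 1 ≤ n := by
      rcases Nat.eq_zero_or_pos n with h0 | h; · exfalso; rw [h0] at hnle; simp at hnle; linarith
      exact h
    have hgt : δ * u < J ^ (n - 1) := by
      have := Nat.find_min hex (m := n - 1) (by omega)
      linarith [not_le.mp this]
    have hJn_gt : J * (δ * u) < J ^ n := by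
      have : J ^ n = J * J ^ (n - 1) := by
        rw [← pow_succ']
        congr 1; omega
      rw [this]
      exact mul_lt_mul_of_pos_left hgt hJ0
    have hterm_lb : c * u ^ 3 ≤ α₁ * J ^ (2 * n) * u - A * J ^ (3 * n) := by
      rw [mul_comm 2 n, mul_comm 3 n, pow_mul, pow_mul]
      have h2 : (J * (δ * u)) ^ 2 ≤ (J ^ n) ^ 2 := by
        apply pow_le_pow_left₀ (by positivity) hJn_gt.le
      have h3 : (J ^ n) ^ 3 ≤ (δ * u) ^ 3 := by
        apply pow_le_pow_left₀ (pow_nonneg hJ0.le n) hnle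
      have := mul_le_mul_of_nonneg_left h2 (mul_nonneg hα₁.le hu.le)
      have h5 := mul_le_mul_of_nonneg_left h3 hA.le
      rw [hcdef]
      nlinarith
    calc c * u ^ 3 ≤ α₁ * J ^ (2 * n) * u - A * J ^ (3 * n) := hterm_lb
      _ ≤ _ := le_ciSup hbdd n
  · refine ciSup_le fun n => (hterm n).trans ?_
    have : C0 ≤ max c C0 := le_max_right _ _
    nlinarith [pow_pos hu 3]
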